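/- Let 0 < α < 1. The topological closure of the conic hull of the set {(x, ε, x^(α/(α−1))) : x > 0, ε ∈ {1,−1}} ⊆ ℝ³ equals the power cone K_α. -/

import Mathlib

open Real

/-- The power cone `K_α = {(x₁,x₂,x₃) : x₁ ≥ 0, x₃ ≥ 0, x₁^α·x₃^(1−α) ≥ |x₂|}`
(real powers are `Real.rpow`). -/
def Kpow (α : ℝ) : Set (Fin 3 → ℝ) :=
  {x | 0 ≤ x 0 ∧ 0 ≤ x 2 ∧ |x 1| ≤ x 0 ^ α * x 2 ^ (1 - α)}

/-- The conic hull of a set `S ⊆ ℝ³`: all finite nonnegative linear combinations of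
elements of `S`. -/
def conicHull (S : Set (Fin 3 → ℝ)) : Set (Fin 3 → ℝ) :=
  {p | ∃ (n : ℕ) (c : Fin n → ℝ) (v : Fin n → (Fin 3 → ℝ)),
    (∀ i, 0 ≤ c i) ∧ (∀ i, v i ∈ S) ∧ p = ∑ i, c i • v i}

/-- Superadditivity of the weighted geometric mean. -/
lemma geom_superadd {α : ℝ} (hα0 : 0 < α) (hα1 : α < 1)
    {a₁ d₁ a₂ d₂ : ℝ} (ha₁ : 0 ≤ a₁) (hd₁ : 0 ≤ d₁) (ha₂ : 0 ≤ a₂) (hd₂ : 0 ≤ d₂) :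
    a₁ ^ α * d₁ ^ (1 - α) + a₂ ^ α * d₂ ^ (1 - α) ≤ (a₁ + a₂) ^ α * (d₁ + d₂) ^ (1 - α) := by
  rcases eq_or_lt_of_le (add_nonneg ha₁ ha₂) with hA | hA
  · have h1 : a₁ = 0 := by linarith
    have h2 : a₂ = 0 := by linarith
    simp [h1, h2, Real.zero_rpow (ne_of_gt hα0)]
  rcases eq_or_lt_of_le (add_nonneg hd₁ hd₂) with hD | hD
  · have h1 : d₁ = 0 := by linarith
    have h2 : d₂ = 0 := by linarith
    have h1α : (0:ℝ) < 1 - α := by linarith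
    simp [h1, h2, Real.zero_rpow (ne_of_gt h1α)]
  set A := a₁ + a₂ with hAdef
  set D := d₁ + d₂ with hDdef
  have hAne : A ^ α ≠ 0 := ne_of_gt (Real.rpow_pos_of_pos hA α)
  have hDne : D ^ (1-α) ≠ 0 := ne_of_gt (Real.rpow_pos_of_pos hD (1-α))
  have key : ∀ a d : ℝ, 0 ≤ a → 0 ≤ d →
      a ^ α * d ^ (1 - α) ≤ A ^ α * D ^ (1-α) * (α * (a / A) + (1 - α) * (d / D)) := by
    intro a d ha hd
    have h1 : (a / A) ^ α * (d / D) ^ (1-α) ≤ α * (a / A) + (1 - α) * (d / D) :=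
      Real.geom_mean_le_arith_mean2_weighted hα0.le (by linarith)
        (div_nonneg ha hA.le) (div_nonneg hd hD.le) (by ring)
    have h2 : a ^ α * d ^ (1 - α) = A ^ α * D ^ (1-α) * ((a / A) ^ α * (d / D) ^ (1-α)) := by
      rw [Real.div_rpow ha hA.le, Real.div_rpow hd hD.le]
      field_simp
    rw [h2]
    exact mul_le_mul_of_nonneg_left h1 (by positivity)
  have hsum : A ^ α * D ^ (1-α) * (α * (a₁ / A) + (1 - α) * (d₁ / D))
      + A ^ α * D ^ (1-α) * (α * (a₂ / A) + (1 - α) * (d₂ / D)) = A ^ α * D ^ (1-α) := by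
    have e : (α * (a₁ / A) + (1 - α) * (d₁ / D)) + (α * (a₂ / A) + (1 - α) * (d₂ / D)) = 1 := by
      field_simp
      ring
    calc A ^ α * D ^ (1-α) * (α * (a₁ / A) + (1 - α) * (d₁ / D))
        + A ^ α * D ^ (1-α) * (α * (a₂ / A) + (1 - α) * (d₂ / D))
        = A ^ α * D ^ (1-α) * ((α * (a₁ / A) + (1 - α) * (d₁ / D))
          + (α * (a₂ / A) + (1 - α) * (d₂ / D))) := by ring
      _ = A ^ α * D ^ (1-α) := by rw [e, mul_one]
  calc a₁ ^ α * d₁ ^ (1 - α) + a₂ ^ α * d₂ ^ (1 - α)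
      ≤ A ^ α * D ^ (1-α) * (α * (a₁ / A) + (1 - α) * (d₁ / D))
        + A ^ α * D ^ (1-α) * (α * (a₂ / A) + (1 - α) * (d₂ / D)) :=
        add_le_add (key a₁ d₁ ha₁ hd₁) (key a₂ d₂ ha₂ hd₂)
    _ = A ^ α * D ^ (1-α) := hsum

lemma isClosed_Kpow {α : ℝ} (hα0 : 0 < α) (hα1 : α < 1) : IsClosed (Kpow α) := by
  have h1 : IsClosed {x : Fin 3 → ℝ | 0 ≤ x 0} := isClosed_le continuous_const (continuous_apply 0)
  have h2 : IsClosed {x : Fin 3 → ℝ | 0 ≤ x 2} := isClosed_le continuous_const (continuous_apply 2)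
  have h3 : IsClosed {x : Fin 3 → ℝ | |x 1| ≤ x 0 ^ α * x 2 ^ (1 - α)} :=
    isClosed_le ((continuous_apply 1).abs)
      (((Real.continuous_rpow_const hα0.le).comp (continuous_apply 0)).mul
        ((Real.continuous_rpow_const (by linarith)).comp (continuous_apply 2)))
  exact (h1.inter (h2.inter h3) : _)

lemma zero_mem_Kpow {α : ℝ} (hα0 : 0 < α) (hα1 : α < 1) : (0 : Fin 3 → ℝ) ∈ Kpow α := by
  refine ⟨le_refl _, le_refl _, ?_⟩
  simp [Real.zero_rpow (ne_of_gt hα0)]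

lemma Kpow_add {α : ℝ} (hα0 : 0 < α) (hα1 : α < 1) {p q : Fin 3 → ℝ}
    (hp : p ∈ Kpow α) (hq : q ∈ Kpow α) : p + q ∈ Kpow α := by
  obtain ⟨hp0, hp2, hp1⟩ := hp
  obtain ⟨hq0, hq2, hq1⟩ := hq
  refine ⟨by simpa using add_nonneg hp0 hq0, by simpa using add_nonneg hp2 hq2, ?_⟩
  have habs : |(p + q) 1| ≤ |p 1| + |q 1| := by simpa using abs_add_le (p 1) (q 1)
  calc |(p + q) 1| ≤ |p 1| + |q 1| := habs
    _ ≤ p 0 ^ α * p 2 ^ (1 - α) + q 0 ^ α * q 2 ^ (1 - α) := add_le_add hp1 hq1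
    _ ≤ (p 0 + q 0) ^ α * (p 2 + q 2) ^ (1 - α) := geom_superadd hα0 hα1 hp0 hp2 hq0 hq2
    _ = (p + q) 0 ^ α * (p + q) 2 ^ (1 - α) := by simp

lemma Kpow_smul {α : ℝ} (hα0 : 0 < α) (hα1 : α < 1) {c : ℝ} (hc : 0 ≤ c) {p : Fin 3 → ℝ}
    (hp : p ∈ Kpow α) : c • p ∈ Kpow α := by
  obtain ⟨hp0, hp2, hp1⟩ := hp
  rcases eq_or_lt_of_le hc with rfl | hc
  · simpa [zero_smul] using zero_mem_Kpow hα0 hα1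
  refine ⟨by simpa using mul_nonneg hc.le hp0, by simpa using mul_nonneg hc.le hp2, ?_⟩
  have e : (c • p) 0 ^ α * (c • p) 2 ^ (1 - α) = c * (p 0 ^ α * p 2 ^ (1 - α)) := by
    simp only [Pi.smul_apply, smul_eq_mul]
    rw [Real.mul_rpow hc.le hp0, Real.mul_rpow hc.le hp2]
    have : c ^ α * c ^ (1 - α) = c := by
      rw [← Real.rpow_add hc]; norm_num
    calc c ^ α * p 0 ^ α * (c ^ (1 - α) * p 2 ^ (1 - α))
        = c ^ α * c ^ (1 - α) * (p 0 ^ α * p 2 ^ (1 - α)) := by ring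
      _ = c * (p 0 ^ α * p 2 ^ (1 - α)) := by rw [this]
  rw [e]
  have : |(c • p) 1| = c * |p 1| := by
    simp [abs_mul, abs_of_nonneg hc.le]
  rw [this]
  exact mul_le_mul_of_nonneg_left hp1 hc.le

lemma conicHull_subset_Kpow {α : ℝ} (hα0 : 0 < α) (hα1 : α < 1) :
    conicHull {p : Fin 3 → ℝ | ∃ x : ℝ, 0 < x ∧ ∃ ε : ℝ, (ε = 1 ∨ ε = -1) ∧
        p = ![x, ε, x ^ (α / (α - 1))]} ⊆ Kpow α := by
  rintro p ⟨n, c, v, hc, hv, rfl⟩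
  have hgen : ∀ i, v i ∈ Kpow α := by
    intro i
    obtain ⟨x, hx, ε, hε, he⟩ := hv i
    have hq : x ^ (α / (α - 1)) > 0 := Real.rpow_pos_of_pos hx _
    have hkey : x ^ α * (x ^ (α / (α - 1))) ^ (1 - α) = 1 := by
      rw [← Real.rpow_mul hx.le, ← Real.rpow_add hx]
      have : α + α / (α - 1) * (1 - α) = 0 := by
        have hne : α - 1 ≠ 0 := by linarith
        field_simp
        ring
      rw [this, Real.rpow_zero]
    rw [he]
    refine ⟨by simpa using hx.le, by simpa using hq.le, ?_⟩
    have h1 : (![x, ε, x ^ (α / (α - 1))] : Fin 3 → ℝ) 1 = ε := rfl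
    have h0 : (![x, ε, x ^ (α / (α - 1))] : Fin 3 → ℝ) 0 = x := rfl
    have h2 : (![x, ε, x ^ (α / (α - 1))] : Fin 3 → ℝ) 2 = x ^ (α / (α - 1)) := rfl
    rw [h1, h0, h2, hkey]
    rcases hε with rfl | rfl <;> simp
  refine Finset.sum_induction _ (· ∈ Kpow α) (fun a b ha hb => Kpow_add hα0 hα1 ha hb)
    (zero_mem_Kpow hα0 hα1) (fun i _ => Kpow_smul hα0 hα1 (hc i) (hgen i))

lemma mem_hull_of_pos {α : ℝ} (hα0 : 0 < α) (hα1 : α < 1) {p : Fin 3 → ℝ}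
    (h0 : 0 < p 0) (h2 : 0 < p 2) (hb : |p 1| ≤ p 0 ^ α * p 2 ^ (1 - α)) :
    p ∈ conicHull {q : Fin 3 → ℝ | ∃ x : ℝ, 0 < x ∧ ∃ ε : ℝ, (ε = 1 ∨ ε = -1) ∧
        q = ![x, ε, x ^ (α / (α - 1))]} := by
  set a := p 0 with ha
  set b := p 1 with hbdef
  set d := p 2 with hd
  set M := a ^ α * d ^ (1 - α) with hM
  have hMpos : 0 < M := by positivity
  set x₀ := (a / d) ^ (1 - α) with hx0
  have hadpos : 0 < a / d := div_pos h0 h2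
  have hx₀pos : 0 < x₀ := Real.rpow_pos_of_pos hadpos _
  have habs := abs_le.mp hb
  have hane : a ^ α ≠ 0 := ne_of_gt (Real.rpow_pos_of_pos h0 α)
  have hdne : d ^ (1 - α) ≠ 0 := ne_of_gt (Real.rpow_pos_of_pos h2 (1 - α))
  have haa : a ^ α * a ^ (1 - α) = a := by rw [← Real.rpow_add h0]; norm_num
  have hdd : d ^ (1 - α) * d ^ α = d := by rw [← Real.rpow_add h2]; norm_num
  have hx0e : x₀ = a ^ (1 - α) / d ^ (1 - α) := by
    rw [hx0, Real.div_rpow h0.le h2.le]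
  have hMx : M * x₀ = a := by
    rw [hM, hx0e]
    field_simp
    exact haa
  have hq : x₀ ^ (α / (α - 1)) = d ^ α / a ^ α := by
    rw [hx0, ← Real.rpow_mul hadpos.le]
    have he : (1 - α) * (α / (α - 1)) = -α := by
      have hne : α - 1 ≠ 0 := by linarith
      field_simp
      ring
    rw [he, Real.rpow_neg hadpos.le, Real.div_rpow h0.le h2.le, inv_div]
  have hMxq : M * x₀ ^ (α / (α - 1)) = d := by
    rw [hM, hq]
    field_simp
    exact hdd
  refine ⟨2, ![(M + b) / 2, (M - b) / 2],
    ![![x₀, 1, x₀ ^ (α / (α - 1))], ![x₀, -1, x₀ ^ (α / (α - 1))]], ?_, ?_, ?_⟩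
  · intro i
    fin_cases i
    · show (0:ℝ) ≤ (M + b) / 2; linarith [habs.1]
    · show (0:ℝ) ≤ (M - b) / 2; linarith [habs.2]
  · intro i
    fin_cases i
    · exact ⟨x₀, hx₀pos, 1, Or.inl rfl, rfl⟩
    · exact ⟨x₀, hx₀pos, -1, Or.inr rfl, rfl⟩
  · funext i
    rw [Fin.sum_univ_two]
    fin_cases i <;>
      simp only [Pi.add_apply, Pi.smul_apply, smul_eq_mul, Matrix.cons_val_zero,
        Matrix.cons_val_one, Matrix.head_cons, Matrix.cons_val_two, Matrix.tail_cons]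
    · show a = (M + b) / 2 * x₀ + (M - b) / 2 * x₀
      have : (M + b) / 2 * x₀ + (M - b) / 2 * x₀ = M * x₀ := by ring
      rw [this, hMx]
    · show b = (M + b) / 2 * 1 + (M - b) / 2 * (-1)
      ring
    · show d = (M + b) / 2 * x₀ ^ (α / (α - 1)) + (M - b) / 2 * x₀ ^ (α / (α - 1))
      have : (M + b) / 2 * x₀ ^ (α / (α - 1)) + (M - b) / 2 * x₀ ^ (α / (α - 1))
          = M * x₀ ^ (α / (α - 1)) := by ring
      rw [this, hMxq]

/-- For `0 < α < 1`, the closure of the conic hull of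
`{(x, ε, x^(α/(α−1))) : x > 0, ε ∈ {1,−1}}` is the power cone `K_α`. -/
theorem closure_conicHull_powCurve_eq_Kpow (α : ℝ) (hα0 : 0 < α) (hα1 : α < 1) :
    closure (conicHull
      {p : Fin 3 → ℝ | ∃ x : ℝ, 0 < x ∧ ∃ ε : ℝ, (ε = 1 ∨ ε = -1) ∧
        p = ![x, ε, x ^ (α / (α - 1))]}) = Kpow α := by
  apply Set.Subset.antisymm
  · exact closure_minimal (conicHull_subset_Kpow hα0 hα1) (isClosed_Kpow hα0 hα1)
  · intro p hp
    obtain ⟨hp0, hp2, hp1⟩ := hp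
    have hcont : Continuous (fun t : ℝ => p + t • (![1, 0, 1] : Fin 3 → ℝ)) :=
      continuous_const.add (continuous_id.smul continuous_const)
    have htend : Filter.Tendsto (fun t : ℝ => p + t • (![1, 0, 1] : Fin 3 → ℝ))
        (nhdsWithin 0 (Set.Ioi 0)) (nhds p) := by
      have h := hcont.tendsto 0
      simp only [zero_smul, add_zero] at h
      exact h.mono_left nhdsWithin_le_nhds
    refine mem_closure_of_tendsto htend ?_
    refine Filter.eventually_of_mem self_mem_nhdsWithin (fun t ht => ?_)
    have htpos : 0 < t := ht
    have e0 : (p + t • (![1, 0, 1] : Fin 3 → ℝ)) 0 = p 0 + t := by simp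
    have e1 : (p + t • (![1, 0, 1] : Fin 3 → ℝ)) 1 = p 1 := by simp
    have e2 : (p + t • (![1, 0, 1] : Fin 3 → ℝ)) 2 = p 2 + t := by simp
    refine mem_hull_of_pos hα0 hα1 ?_ ?_ ?_
    · rw [e0]; linarith
    · rw [e2]; linarith
    · rw [e0, e1, e2]
      refine le_trans hp1 ?_
      exact mul_le_mul (Real.rpow_le_rpow hp0 (by linarith) hα0.le)
        (Real.rpow_le_rpow hp2 (by linarith) (by linarith))
        (Real.rpow_nonneg hp2 _) (Real.rpow_nonneg (by linarith) _)
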